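/- Let S(x) ∈ ℤ[[x]] satisfy S(x) = 1 + x·S(x) − x²·S(x)² with constant term 1, and let T(x) = Σ_{n≥1} (−1)^{n+1} F(n) x^n be the signed Fibonacci generating function. Then (x·S(x)) ∘ T = x, i.e., T(x) is the compositional inverse of x·S(x) in ℤ[[x]]. -/

import Mathlib

inductive MStep where
  | U : MStep
  | D : MStep
  | H : MStep
deriving DecidableEq

/-- A word in {U,D,H} is a Motzkin path if #U = #D and no prefix has more D's than U's. -/
def IsMotzkin (w : List MStep) : Prop :=
  w.count MStep.U = w.count MStep.D ∧
  ∀ p : List MStep, p <+: w → p.count MStep.D ≤ p.count MStep.U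

/-- Number of Motzkin paths of length n (the n-th Motzkin number). -/
noncomputable def motzkinNum (n : ℕ) : ℕ :=
  Nat.card {w : List MStep // w.length = n ∧ IsMotzkin w}

/-- Number of Motzkin paths of length n with an even number of U steps. -/
noncomputable def evenMotzkin (n : ℕ) : ℕ :=
  Nat.card {w : List MStep // w.length = n ∧ IsMotzkin w ∧ Even (w.count MStep.U)}

/-- Number of Motzkin paths of length n with an odd number of U steps. -/
noncomputable def oddMotzkin (n : ℕ) : ℕ :=
  Nat.card {w : List MStep // w.length = n ∧ IsMotzkin w ∧ Odd (w.count MStep.U)}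

/-- The shadow of the n-th Motzkin number: s(n) = a(n) - b(n). -/
noncomputable def shadow (n : ℕ) : ℤ :=
  (evenMotzkin n : ℤ) - (oddMotzkin n : ℤ)

/-- Composition f ∘ g of formal power series (intended for g with zero constant term). -/
noncomputable def PSComp (f g : PowerSeries ℤ) : PowerSeries ℤ :=
  PowerSeries.mk fun n =>
    PowerSeries.coeff n
      (∑ k ∈ Finset.range (n + 1), PowerSeries.C (PowerSeries.coeff k f) * g ^ k)

section PSCompAux

open PowerSeries

private lemma coeff_pow_zero_of_cc {g : PowerSeries ℤ} (hg : constantCoeff g = 0)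
    {n k : ℕ} (h : n < k) : PowerSeries.coeff n (g ^ k) = 0 := by
  obtain ⟨r, hr⟩ := pow_dvd_pow_of_dvd (PowerSeries.X_dvd_iff.mpr hg) k
  rw [hr, PowerSeries.coeff_mul]
  apply Finset.sum_eq_zero
  rintro ⟨p, q⟩ hpq
  rw [Finset.HasAntidiagonal.mem_antidiagonal] at hpq
  rw [PowerSeries.coeff_X_pow, if_neg (by omega), zero_mul]

private lemma coeff_eval₂_zero {g : PowerSeries ℤ} (hg : constantCoeff g = 0)
    {P : Polynomial ℤ} {n : ℕ} (hP : ∀ k ≤ n, P.coeff k = 0) :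
    PowerSeries.coeff n (P.eval₂ (PowerSeries.C) g) = 0 := by
  rw [Polynomial.eval₂_eq_sum_range' (PowerSeries.C) (lt_add_one P.natDegree) g, map_sum]
  apply Finset.sum_eq_zero
  intro k _
  rw [PowerSeries.coeff_C_mul]
  rcases le_or_gt k n with hk | hk
  · rw [hP k hk, zero_mul]
  · rw [coeff_pow_zero_of_cc hg hk, mul_zero]

private lemma coeff_eval₂_congr {g : PowerSeries ℤ} (hg : constantCoeff g = 0)
    {P Q : Polynomial ℤ} {n : ℕ} (h : ∀ k ≤ n, P.coeff k = Q.coeff k) :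
    PowerSeries.coeff n (P.eval₂ (PowerSeries.C) g)
      = PowerSeries.coeff n (Q.eval₂ (PowerSeries.C) g) := by
  have h0 : PowerSeries.coeff n ((P - Q).eval₂ (PowerSeries.C) g) = 0 :=
    coeff_eval₂_zero hg (fun k hk => by simp [Polynomial.coeff_sub, h k hk])
  rw [Polynomial.eval₂_sub, map_sub] at h0
  exact sub_eq_zero.mp h0

private lemma coeff_PSComp (f g : PowerSeries ℤ) (n : ℕ) :
    PowerSeries.coeff n (PSComp f g)
      = PowerSeries.coeff n ((PowerSeries.trunc (n + 1) f).eval₂ (PowerSeries.C) g) := by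
  rw [PSComp, PowerSeries.coeff_mk, PowerSeries.eval₂_trunc_eq_sum_range]

private lemma coeff_PSComp' {g : PowerSeries ℤ} (hg : constantCoeff g = 0)
    (f : PowerSeries ℤ) {n N : ℕ} (hN : n < N) :
    PowerSeries.coeff n (PSComp f g)
      = PowerSeries.coeff n ((PowerSeries.trunc N f).eval₂ (PowerSeries.C) g) := by
  rw [coeff_PSComp]
  apply coeff_eval₂_congr hg
  intro k hk
  rw [PowerSeries.coeff_trunc, PowerSeries.coeff_trunc,
    if_pos (by omega), if_pos (by omega)]

private lemma PSComp_add (f h g : PowerSeries ℤ) :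
    PSComp (f + h) g = PSComp f g + PSComp h g := by
  ext n
  simp [PSComp, PowerSeries.coeff_mk, map_add, add_mul, Finset.sum_add_distrib]

private lemma PSComp_sub (f h g : PowerSeries ℤ) :
    PSComp (f - h) g = PSComp f g - PSComp h g := by
  ext n
  simp [PSComp, PowerSeries.coeff_mk, map_sub, sub_mul, Finset.sum_sub_distrib]

private lemma PSComp_one (g : PowerSeries ℤ) : PSComp 1 g = 1 := by
  ext n
  rw [coeff_PSComp, PowerSeries.trunc_one, Polynomial.eval₂_one]

private lemma PSComp_X {g : PowerSeries ℤ} (hg : constantCoeff g = 0) :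
    PSComp PowerSeries.X g = g := by
  ext n
  rw [coeff_PSComp' hg _ (show n < n + 2 by omega), PowerSeries.trunc_X, Polynomial.eval₂_X]

private lemma PSComp_mul {g : PowerSeries ℤ} (hg : constantCoeff g = 0)
    (f h : PowerSeries ℤ) : PSComp (f * h) g = PSComp f g * PSComp h g := by
  ext n
  have hR : PowerSeries.coeff n (PSComp f g * PSComp h g)
      = PowerSeries.coeff n
        (((PowerSeries.trunc (n + 1) f) * (PowerSeries.trunc (n + 1) h)).eval₂
          (PowerSeries.C) g) := by
    rw [Polynomial.eval₂_mul, PowerSeries.coeff_mul, PowerSeries.coeff_mul]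
    apply Finset.sum_congr rfl
    rintro ⟨p, q⟩ hpq
    rw [Finset.HasAntidiagonal.mem_antidiagonal] at hpq
    rw [coeff_PSComp' hg f (show p < n + 1 by omega),
      coeff_PSComp' hg h (show q < n + 1 by omega)]
  rw [hR, coeff_PSComp]
  apply coeff_eval₂_congr hg
  intro k hk
  rw [PowerSeries.coeff_trunc, if_pos (by omega), Polynomial.coeff_mul, PowerSeries.coeff_mul]
  apply Finset.sum_congr rfl
  rintro ⟨i, j⟩ hij
  rw [Finset.HasAntidiagonal.mem_antidiagonal] at hij
  rw [PowerSeries.coeff_trunc, PowerSeries.coeff_trunc, if_pos (by omega), if_pos (by omega)]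

end PSCompAux

open PowerSeries in
theorem stmt_17 (S : PowerSeries ℤ) (hconst : constantCoeff S = 1)
    (hS : S = 1 + X * S - X ^ 2 * S ^ 2) :
    PSComp (X * S)
      (PowerSeries.mk fun n => if n = 0 then 0 else (-1) ^ (n + 1) * (Nat.fib n : ℤ)) = X := by
  set T : PowerSeries ℤ :=
    PowerSeries.mk fun n => if n = 0 then 0 else (-1) ^ (n + 1) * (Nat.fib n : ℤ) with hTdef
  have hT0 : constantCoeff T = 0 := by
    rw [hTdef, ← PowerSeries.coeff_zero_eq_constantCoeff, PowerSeries.coeff_mk]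
    simp
  -- the Fibonacci functional equation : X = T + X * T - X ^ 2 * T
  have hTX : X = T + X * T - X ^ 2 * T := by
    ext n
    have hcT : ∀ m : ℕ, coeff m T = if m = 0 then 0 else (-1) ^ (m + 1) * (Nat.fib m : ℤ) := by
      intro m; rw [hTdef, PowerSeries.coeff_mk]
    rw [map_sub, map_add, PowerSeries.coeff_X_pow_mul' T 2 n]
    match n with
    | 0 =>
      simp [hcT 0, PowerSeries.coeff_zero_X_mul]
    | 1 =>
      rw [PowerSeries.coeff_succ_X_mul]
      simp [hcT 0, hcT 1]
    | (k + 2) =>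
      rw [PowerSeries.coeff_succ_X_mul, if_pos (by omega : 2 ≤ k + 2),
        show k + 2 - 2 = k by omega, PowerSeries.coeff_X, if_neg (by omega : ¬ k + 2 = 1),
        hcT (k + 2), hcT (k + 1), hcT k, if_neg (by omega : ¬ k + 2 = 0),
        if_neg (by omega : ¬ k + 1 = 0)]
      match k with
      | 0 => norm_num
      | (j + 1) =>
        rw [if_neg (by omega : ¬ j + 1 = 0), show j + 1 + 2 = j + 1 + 2 by rfl,
          Nat.fib_add_two (n := j + 1)]
        push_cast
        ring
  -- algebraic manipulation
  have hmul := PSComp_mul hT0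
  set P := PSComp S T with hPdef
  have hcomp : PSComp (X * S) T = T * P := by rw [hmul, PSComp_X hT0]
  set B := T * P with hBdef
  have hX2 : (X : PowerSeries ℤ) ^ 2 * S ^ 2 = (X * S) * (X * S) := by ring
  have hPeq : P = 1 + B - B * B := by
    calc P = PSComp (1 + X * S - X ^ 2 * S ^ 2) T := by
            rw [hPdef]; exact congrArg (fun u => PSComp u T) hS
    _ = 1 + PSComp (X * S) T - PSComp (X * S) T * PSComp (X * S) T := by
            rw [PSComp_sub, PSComp_add, PSComp_one, hX2, hmul (X * S) (X * S)]
    _ = 1 + B - B * B := by rw [hcomp]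
  rw [hcomp]
  have hBeq : B = T * (1 + B - B * B) := by
    calc B = T * P := hBdef
    _ = T * (1 + B - B * B) := by rw [hPeq]
  have hXeq : (X : PowerSeries ℤ) = T * (1 + X - X * X) := by linear_combination hTX
  have key : (B - X) * (1 - T * (1 - B - X)) = 0 := by linear_combination hBeq - hXeq
  rcases mul_eq_zero.mp key with h | h
  · exact sub_eq_zero.mp h
  · exfalso
    have hc := congrArg (constantCoeff) h
    simp [hT0] at hc
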